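/- For n ≥ 8, N(n) ≤ (1/6)n(n−1)(p(n) + 2^{n−2}/n), i.e. 6n·N(n) ≤ n(n−1)(n·p(n) + 2^{n−2}), where N(n) = Σ_{λ⊢n} n(λ). -/

import Mathlib

/-- The descending list of parts of a partition. -/
def Nat.Partition.descParts {n : ℕ} (P : n.Partition) : List ℕ :=
  (P.parts.sort (· ≤ ·)).reverse

/-- `n(λ) = Σ_{i≥1} (i-1)λ_i` for a partition `λ` listed in decreasing order. -/
def Nat.Partition.nval {n : ℕ} (P : n.Partition) : ℕ :=
  (List.zipWith (· * ·) (List.range P.descParts.length) P.descParts).sum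

/-- `N(n) = Σ_{λ ⊢ n} n(λ)`. -/
def Nfun (n : ℕ) : ℕ := ∑ P : Nat.Partition n, P.nval

/-- `p(n)`, the number of partitions of `n`. -/
def pfun (n : ℕ) : ℕ := Fintype.card (Nat.Partition n)

/-! ### Enumeration of partitions as decreasing lists -/

/-- Partitions of `n` with all parts `≤ k`, as decreasing lists of positive
integers (fuel-based recursion). -/
def enumA : ℕ → ℕ → ℕ → List (List ℕ)
  | _, 0, _ => [[]]
  | 0, _+1, _ => []
  | f+1, n+1, k => (List.range' 1 (min k (n+1))).flatMap
      (fun i => (enumA f (n+1-i) i).map (i :: ·))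

/-- `n(λ)` of a list. -/
def lnval (l : List ℕ) : ℕ := (List.zipWith (· * ·) (List.range l.length) l).sum

/-- counting version of `enumA`. -/
def pcnt : ℕ → ℕ → ℕ → ℕ
  | _, 0, _ => 1
  | 0, _+1, _ => 0
  | f+1, n+1, k => ((List.range' 1 (min k (n+1))).map (fun i => pcnt f (n+1-i) i)).sum

/-- sum of `lnval` over `enumA`. -/
def snv : ℕ → ℕ → ℕ → ℕ
  | _, 0, _ => 0
  | 0, _+1, _ => 0
  | f+1, n+1, k => ((List.range' 1 (min k (n+1))).map
      (fun i => snv f (n+1-i) i + (n+1-i) * pcnt f (n+1-i) i)).sum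

lemma lnval_aux (l : List ℕ) (r : List ℕ) :
    (List.zipWith (· * ·) (r.map (· + 1)) l).sum
      = (List.zipWith (· * ·) (List.replicate r.length 1) l).sum
        + (List.zipWith (· * ·) r l).sum := by
  induction l generalizing r with
  | nil => simp
  | cons a t ih =>
      rcases r with _ | ⟨b, r⟩
      · simp
      · simp only [List.map_cons, List.zipWith_cons_cons, List.sum_cons,
          List.length_cons, List.replicate_succ]
        rw [ih r]
        ring

lemma zipWith_one_sum (l : List ℕ) (m : ℕ) (hm : l.length ≤ m) :
    (List.zipWith (· * ·) (List.replicate m 1) l).sum = l.sum := by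
  induction l generalizing m with
  | nil => simp
  | cons a t ih =>
      rcases m with _ | m
      · simp at hm
      · simp only [List.replicate_succ, List.zipWith_cons_cons, List.sum_cons, one_mul]
        rw [ih m (by simpa using hm)]

lemma lnval_cons (a : ℕ) (l : List ℕ) : lnval (a :: l) = l.sum + lnval l := by
  simp only [lnval, List.length_cons, List.range_succ_eq_map, List.zipWith_cons_cons,
    List.sum_cons, Nat.zero_mul, Nat.zero_add]
  rw [lnval_aux l (List.range l.length), List.length_range,
    zipWith_one_sum l l.length le_rfl]

lemma sum_map_add {α : Type*} (L : List α) (f g : α → ℕ) :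
    (L.map (fun x => f x + g x)).sum = (L.map f).sum + (L.map g).sum := by
  induction L with
  | nil => simp
  | cons a t ih => simp only [List.map_cons, List.sum_cons, ih]; ring

/-- soundness of `enumA`. -/
lemma enumA_sound : ∀ f n k, ∀ l ∈ enumA f n k,
    l.sum = n ∧ (∀ x ∈ l, 0 < x ∧ x ≤ k) ∧ l.Pairwise (· ≥ ·) := by
  intro f
  induction f with
  | zero =>
      intro n k l hl
      cases n with
      | zero => simp only [enumA, List.mem_singleton] at hl; subst hl; simp
      | succ n => simp [enumA] at hl
  | succ f ih =>
      intro n k l hl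
      cases n with
      | zero => simp only [enumA, List.mem_singleton] at hl; subst hl; simp
      | succ n =>
          simp only [enumA, List.mem_flatMap, List.mem_map] at hl
          obtain ⟨i, hi, t, ht, rfl⟩ := hl
          rw [List.mem_range'_1] at hi
          obtain ⟨hi1, hi2⟩ := hi
          have hik : i ≤ k := by omega
          have hin : i ≤ n + 1 := by omega
          obtain ⟨hsum, hmem, hsort⟩ := ih (n+1-i) i t ht
          refine ⟨by simp only [List.sum_cons, hsum]; omega, ?_, ?_⟩
          · intro x hx
            rcases List.mem_cons.1 hx with hx | hx
            · omega
            · have := hmem x hx; omega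
          · rw [List.pairwise_cons]
            exact ⟨fun b hb => (hmem b hb).2, hsort⟩

/-- completeness of `enumA`. -/
lemma enumA_complete : ∀ f n k l, n ≤ f → l.sum = n → (∀ x ∈ l, 0 < x ∧ x ≤ k) →
    l.Pairwise (· ≥ ·) → l ∈ enumA f n k := by
  intro f
  induction f with
  | zero =>
      intro n k l hn hsum hmem _
      have hn0 : n = 0 := by omega
      subst hn0
      have : l = [] := by
        cases l with
        | nil => rfl
        | cons a t =>
            exfalso
            have ha := (hmem a (by simp)).1
            simp only [List.sum_cons] at hsum
            omega
      subst this
      simp [enumA]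
  | succ f ih =>
      intro n k l hn hsum hmem hsort
      cases n with
      | zero =>
          have : l = [] := by
            cases l with
            | nil => rfl
            | cons a t =>
                exfalso
                have ha := (hmem a (by simp)).1
                simp only [List.sum_cons] at hsum
                omega
          subst this
          simp [enumA]
      | succ n =>
          cases l with
          | nil => simp at hsum
          | cons a t =>
              simp only [enumA, List.mem_flatMap, List.mem_map]
              have ha1 := (hmem a (by simp)).1
              have ha2 := (hmem a (by simp)).2
              simp only [List.sum_cons] at hsum
              rw [List.pairwise_cons] at hsort
              refine ⟨a, ?_, t, ?_, rfl⟩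
              · rw [List.mem_range'_1]
                omega
              · refine ih (n+1-a) a t (by omega) (by omega) ?_ hsort.2
                intro x hx
                exact ⟨(hmem x (by simp [hx])).1, hsort.1 x hx⟩

lemma enumA_nodup : ∀ f n k, (enumA f n k).Nodup := by
  intro f
  induction f with
  | zero =>
      intro n k
      cases n <;> simp [enumA]
  | succ f ih =>
      intro n k
      cases n with
      | zero => simp [enumA]
      | succ n =>
          rw [enumA, List.nodup_flatMap]
          constructor
          · intro i _
            exact (ih _ _).map (fun a b h => by injection h)
          · have hn : (List.range' 1 (min k (n+1))).Nodup := List.nodup_range'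
            refine List.Pairwise.imp ?_ hn
            intro a b hab
            intro l hla hlb
            simp only [List.mem_map] at hla hlb
            obtain ⟨t, _, rfl⟩ := hla
            obtain ⟨t', _, h'⟩ := hlb
            injection h' with h1 _
            exact hab h1.symm

/-- lengths agree with `pcnt`. -/
lemma enumA_length : ∀ f n k, (enumA f n k).length = pcnt f n k := by
  intro f
  induction f with
  | zero => intro n k; cases n <;> simp [enumA, pcnt]
  | succ f ih =>
      intro n k
      cases n with
      | zero => simp [enumA, pcnt]
      | succ n =>
          rw [enumA, pcnt, List.length_flatMap]
          congr 1
          apply List.map_congr_left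
          intro i _
          simp [Function.comp, ih]

/-- `lnval`-sums agree with `snv`. -/
lemma enumA_snv : ∀ f n k, ((enumA f n k).map lnval).sum = snv f n k := by
  intro f
  induction f with
  | zero => intro n k; cases n <;> simp [enumA, snv, lnval]
  | succ f ih =>
      intro n k
      cases n with
      | zero => simp [enumA, snv, lnval]
      | succ n =>
          rw [enumA, snv, List.map_flatMap, List.flatMap_def, List.sum_flatten,
            List.map_map]
          congr 1
          apply List.map_congr_left
          intro i _
          simp only [Function.comp, List.map_map]
          have h1 : (lnval ∘ (i :: ·)) = fun t => t.sum + lnval t := by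
            funext t; simp [Function.comp, lnval_cons]
          rw [h1, sum_map_add, ih]
          have hall : ∀ b ∈ (enumA f (n+1-i) i).map List.sum, b = n+1-i := by
            intro b hb
            simp only [List.mem_map] at hb
            obtain ⟨t, ht, rfl⟩ := hb
            exact (enumA_sound f (n+1-i) i t ht).1
          have h2 : ((enumA f (n+1-i) i).map List.sum).sum
              = (n+1-i) * pcnt f (n+1-i) i := by
            rw [List.eq_replicate_of_mem hall]
            simp [enumA_length, Nat.mul_comm]
          omega

/-! ### Bridge to `Nat.Partition` -/

/-- make a partition from a valid list. -/
def mkPart (n : ℕ) (l : List ℕ) (h : l ∈ enumA n n n) : n.Partition where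
  parts := ↑l
  parts_pos := fun hi => ((enumA_sound n n n l h).2.1 _ hi).1
  parts_sum := by
    rw [Multiset.sum_coe]
    exact (enumA_sound n n n l h).1

lemma sort_eq_reverse_of_sorted (l : List ℕ) (hsort : l.Pairwise (· ≥ ·)) :
    Multiset.sort (↑l : Multiset ℕ) (· ≤ ·) = l.reverse := by
  have hp1 : List.Perm (Multiset.sort (↑l : Multiset ℕ) (· ≤ ·)) l := by
    rw [← Multiset.coe_eq_coe, Multiset.sort_eq]
  have hperm : List.Perm (Multiset.sort (↑l : Multiset ℕ) (· ≤ ·)) l.reverse :=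
    hp1.trans (List.reverse_perm l).symm
  refine List.Perm.eq_of_pairwise' (Multiset.pairwise_sort _ _) ?_ hperm
  rw [List.pairwise_reverse]
  exact hsort.imp (fun h => h)

lemma descParts_mkPart (n : ℕ) (l : List ℕ) (h : l ∈ enumA n n n) :
    (mkPart n l h).descParts = l := by
  have hsort : l.Pairwise (· ≥ ·) := (enumA_sound n n n l h).2.2
  show (Multiset.sort (mkPart n l h).parts (· ≤ ·)).reverse = l
  rw [show (mkPart n l h).parts = ↑l from rfl,
    sort_eq_reverse_of_sorted l hsort, List.reverse_reverse]

lemma descParts_coe {n : ℕ} (P : n.Partition) : (↑P.descParts : Multiset ℕ) = P.parts := by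
  rw [Nat.Partition.descParts, Multiset.coe_reverse, Multiset.sort_eq]

lemma descParts_sum {n : ℕ} (P : n.Partition) : P.descParts.sum = n := by
  have := congrArg Multiset.sum (descParts_coe P)
  rw [Multiset.sum_coe] at this
  rw [this, P.parts_sum]

lemma descParts_length {n : ℕ} (P : n.Partition) :
    P.descParts.length = Multiset.card P.parts := by
  have := congrArg Multiset.card (descParts_coe P)
  simpa using this

lemma descParts_sorted {n : ℕ} (P : n.Partition) : P.descParts.Pairwise (· ≥ ·) := by
  rw [Nat.Partition.descParts, List.pairwise_reverse]
  exact (Multiset.pairwise_sort P.parts (· ≤ ·)).imp (fun h => h)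

lemma descParts_mem {n : ℕ} (P : n.Partition) : P.descParts ∈ enumA n n n := by
  apply enumA_complete n n n _ le_rfl (descParts_sum P) _ (descParts_sorted P)
  intro x hx
  have hx' : x ∈ P.parts := by rw [← descParts_coe P]; exact_mod_cast hx
  refine ⟨P.parts_pos hx', ?_⟩
  have := Multiset.single_le_sum (fun y _ => Nat.zero_le y) x hx'
  rwa [P.parts_sum] at this

lemma mkPart_descParts {n : ℕ} (P : n.Partition) :
    mkPart n P.descParts (descParts_mem P) = P := by
  apply Nat.Partition.ext
  show (↑P.descParts : Multiset ℕ) = P.parts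
  exact descParts_coe P

/-- the list of all partitions of `n`. -/
def partList (n : ℕ) : List (Nat.Partition n) :=
  (enumA n n n).pmap (fun l h => mkPart n l h) (fun _ h => h)

lemma partList_nodup (n : ℕ) : (partList n).Nodup := by
  apply List.Nodup.pmap _ (enumA_nodup n n n)
  intro a ha b hb hab
  have := congrArg Nat.Partition.descParts hab
  rwa [descParts_mkPart n a ha, descParts_mkPart n b hb] at this

lemma mem_partList (n : ℕ) (P : n.Partition) : P ∈ partList n := by
  rw [partList, List.mem_pmap]
  exact ⟨P.descParts, descParts_mem P, mkPart_descParts P⟩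

lemma univ_eq_partList (n : ℕ) :
    (Finset.univ : Finset (Nat.Partition n)) = (partList n).toFinset :=
  (Finset.eq_univ_iff_forall.2 fun P => List.mem_toFinset.2 (mem_partList n P)).symm

lemma pfun_eq (n : ℕ) : pfun n = pcnt n n n := by
  rw [pfun, ← enumA_length n n n, ← Finset.card_univ, univ_eq_partList,
    List.toFinset_card_of_nodup (partList_nodup n), partList, List.length_pmap]

lemma nval_eq_lnval {n : ℕ} (P : n.Partition) : P.nval = lnval P.descParts := rfl

lemma Nfun_eq (n : ℕ) : Nfun n = snv n n n := by
  rw [Nfun, ← enumA_snv n n n, univ_eq_partList,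
    List.sum_toFinset _ (partList_nodup n), partList, List.map_pmap]
  have hc : List.pmap (fun l h => (mkPart n l h).nval) (enumA n n n) (fun _ h => h)
      = List.pmap (fun l (_ : l ∈ enumA n n n) => lnval l) (enumA n n n) (fun _ h => h) :=
    List.pmap_congr_left _ (fun a ha h₁ h₂ => by
      rw [nval_eq_lnval, descParts_mkPart])
  rw [hc, List.pmap_eq_map]

/-! ### Bounds -/

lemma zipWith_le_sum (w : List ℕ) (B : ℕ) (hw : ∀ i ∈ w, i ≤ B) (l : List ℕ) :
    (List.zipWith (· * ·) w l).sum ≤ B * l.sum := by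
  induction w generalizing l with
  | nil => simp
  | cons a w ih =>
      rcases l with _ | ⟨b, l⟩
      · simp
      · simp only [List.zipWith_cons_cons, List.sum_cons, Nat.mul_add]
        have h1 : a * b ≤ B * b := Nat.mul_le_mul_right b (hw a (by simp))
        have h2 := ih (fun i hi => hw i (by simp [hi])) l
        omega

lemma nval_le {n : ℕ} (P : n.Partition) :
    P.nval ≤ (Multiset.card P.parts - 1) * n := by
  have h := zipWith_le_sum (List.range P.descParts.length) (P.descParts.length - 1)
    (fun i hi => by rw [List.mem_range] at hi; omega) P.descParts
  rw [descParts_sum] at h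
  calc P.nval = (List.zipWith (· * ·) (List.range P.descParts.length) P.descParts).sum := rfl
    _ ≤ (P.descParts.length - 1) * n := h
    _ = (Multiset.card P.parts - 1) * n := by rw [descParts_length]

/-- sum of (x-1) plus card equals sum, for positive parts. -/
lemma sum_map_pred (M : Multiset ℕ) (h : ∀ x ∈ M, 0 < x) :
    (M.map (fun x => x - 1)).sum + Multiset.card M = M.sum := by
  induction M using Multiset.induction_on with
  | empty => simp
  | cons a M ih =>
      simp only [Multiset.map_cons, Multiset.sum_cons, Multiset.card_cons]
      have ha := h a (Multiset.mem_cons_self a M)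
      have := ih (fun x hx => h x (Multiset.mem_cons_of_mem hx))
      omega

lemma card_parts_le {n : ℕ} (P : n.Partition) : Multiset.card P.parts ≤ n := by
  have := sum_map_pred P.parts (fun x hx => P.parts_pos hx)
  rw [P.parts_sum] at this
  omega

lemma pfun_le_two_pow (m : ℕ) : pfun m ≤ 2 ^ m := by
  calc pfun m ≤ Fintype.card (Composition m) :=
        Fintype.card_le_of_surjective _ Nat.Partition.ofComposition_surj
    _ = 2 ^ (m - 1) := composition_card m
    _ ≤ 2 ^ m := Nat.pow_le_pow_right (by norm_num) (by omega)

/-- reconstruction of the parts from the stripped multiset. -/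
lemma parts_recon {n k : ℕ} (P : Nat.Partition n) (hk : Multiset.card P.parts = k) :
    P.parts = (((P.parts.map (fun x => x - 1)).filter (fun x => 0 < x))
      + Multiset.replicate
        (k - Multiset.card ((P.parts.map (fun x => x - 1)).filter (fun x => 0 < x))) 0).map
      (fun x => x + 1) := by
  set M := P.parts.map (fun x => x - 1) with hM
  have h1 : M.filter (fun x => 0 < x) + M.filter (fun x => ¬ 0 < x) = M :=
    Multiset.filter_add_not _ _
  have hcM : Multiset.card M = k := by rw [hM, Multiset.card_map, hk]
  have h3 : Multiset.card (M.filter fun x => ¬ 0 < x)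
      = k - Multiset.card (M.filter fun x => 0 < x) := by
    have := congrArg Multiset.card h1
    rw [Multiset.card_add] at this
    omega
  have h2 : M.filter (fun x => ¬ 0 < x)
      = Multiset.replicate (k - Multiset.card (M.filter fun x => 0 < x)) 0 := by
    rw [← h3]
    rw [Multiset.eq_replicate_card]
    intro b hb
    have := (Multiset.mem_filter.1 hb).2
    omega
  have h4 : M.filter (fun x => 0 < x)
      + Multiset.replicate (k - Multiset.card (M.filter fun x => 0 < x)) 0 = M := by
    rw [← h2]; exact h1
  calc P.parts = M.map (fun x => x + 1) := by
        rw [hM, Multiset.map_map]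
        have : P.parts.map ((fun x => x + 1) ∘ (fun x => x - 1)) = P.parts.map id :=
          Multiset.map_congr rfl (fun x hx => by
            have := P.parts_pos hx
            simp only [Function.comp_apply, id_eq]
            omega)
        rw [this, Multiset.map_id]
    _ = _ := by rw [h4]

/-- number of partitions of `n` with exactly `k` parts is at most `pfun (n-k)`. -/
lemma fiber_card_le (n k : ℕ) :
    ((Finset.univ : Finset (Nat.Partition n)).filter
      (fun P => Multiset.card P.parts = k)).card ≤ pfun (n - k) := by
  classical
  calc ((Finset.univ : Finset (Nat.Partition n)).filter
          (fun P => Multiset.card P.parts = k)).card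
      ≤ ((Finset.univ : Finset (Nat.Partition (n - k))).image
          (fun Q => Q.parts)).card := by
        apply Finset.card_le_card_of_injOn
          (fun P => (P.parts.map (fun x => x - 1)).filter (fun x => 0 < x))
        · intro P hP
          rw [Finset.mem_coe, Finset.mem_filter] at hP
          have hk := hP.2
          have hsum : ((P.parts.map (fun x => x - 1)).filter (fun x => 0 < x)).sum
              = n - k := by
            have hs := Multiset.sum_filter_add_sum_filter_not
              (s := P.parts.map fun x => x - 1) (fun x => 0 < x)
            have h0 : ((P.parts.map fun x => x - 1).filter (fun x => ¬ 0 < x)).sum = 0 :=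
              Multiset.sum_eq_zero (fun x hx => by
                have := (Multiset.mem_filter.1 hx).2; omega)
            have hmp := sum_map_pred P.parts (fun x hx => P.parts_pos hx)
            rw [P.parts_sum, hk] at hmp
            omega
          refine Finset.mem_image.2 ⟨⟨(P.parts.map (fun x => x - 1)).filter (fun x => 0 < x),
            ?_, hsum⟩, Finset.mem_univ _, rfl⟩
          intro i hi
          exact (Multiset.mem_filter.1 hi).2
        · intro P hP Q hQ hfPQ
          simp only [Finset.coe_filter, Set.mem_setOf_eq, Finset.mem_univ, true_and] at hP hQ
          apply Nat.Partition.ext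
          rw [parts_recon P hP, parts_recon Q hQ]
          simp only at hfPQ
          rw [hfPQ]
    _ ≤ (Finset.univ : Finset (Nat.Partition (n - k))).card := Finset.card_image_le
    _ = pfun (n - k) := Finset.card_univ

/-- tail sum bound. -/
lemma tail_sum (n : ℕ) (hn : 8 ≤ n) :
    (∑ k ∈ Finset.Icc 9 n, (k - 1) * 2 ^ (n - k)) + (n + 1) ≤ 9 * 2 ^ (n - 8) := by
  induction n, hn using Nat.le_induction with
  | base =>
      rw [show Finset.Icc 9 8 = ∅ by rfl]
      simp
  | succ n hn ih =>
      rw [Finset.sum_Icc_succ_top (by omega)]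
      have h1 : ∑ k ∈ Finset.Icc 9 n, (k - 1) * 2 ^ (n + 1 - k)
          = 2 * ∑ k ∈ Finset.Icc 9 n, (k - 1) * 2 ^ (n - k) := by
        rw [Finset.mul_sum]
        apply Finset.sum_congr rfl
        intro k hk
        rw [Finset.mem_Icc] at hk
        rw [show n + 1 - k = (n - k) + 1 by omega, pow_succ]
        ring
      have e1 : n + 1 - (n + 1) = 0 := by omega
      have e2 : n + 1 - 8 = (n - 8) + 1 := by omega
      rw [h1, e1, e2, pow_zero, mul_one, pow_succ]
      omega

/-- the asymptotic part. -/
lemma Nfun_le_big (n : ℕ) (hn : 43 ≤ n) :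
    6 * n * Nfun n ≤ n * (n - 1) * (n * pfun n + 2 ^ (n - 2)) := by
  classical
  set p := pfun n with hp
  set q := 2 ^ (n - 8) with hq
  -- split the sum
  have hsplit : Nfun n
      = (∑ P ∈ Finset.univ.filter (fun P : Nat.Partition n => Multiset.card P.parts ≤ 8),
          P.nval)
        + ∑ P ∈ Finset.univ.filter (fun P : Nat.Partition n => ¬ Multiset.card P.parts ≤ 8),
          P.nval := (Finset.sum_filter_add_sum_filter_not _ _ _).symm
  -- bound the small-part sum
  have hA : (∑ P ∈ Finset.univ.filter (fun P : Nat.Partition n => Multiset.card P.parts ≤ 8),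
      P.nval) ≤ p * (7 * n) := by
    calc (∑ P ∈ Finset.univ.filter (fun P : Nat.Partition n => Multiset.card P.parts ≤ 8),
        P.nval)
        ≤ (Finset.univ.filter
            (fun P : Nat.Partition n => Multiset.card P.parts ≤ 8)).card • (7 * n) := by
          apply Finset.sum_le_card_nsmul
          intro P hP
          rw [Finset.mem_filter] at hP
          calc P.nval ≤ (Multiset.card P.parts - 1) * n := nval_le P
            _ ≤ 7 * n := Nat.mul_le_mul_right n (by omega)
      _ ≤ p * (7 * n) := by
          rw [smul_eq_mul]
          apply Nat.mul_le_mul_right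
          rw [hp, pfun, ← Finset.card_univ]
          exact Finset.card_le_card (Finset.filter_subset _ _)
  -- bound the large-part sum
  have hB : (∑ P ∈ Finset.univ.filter
      (fun P : Nat.Partition n => ¬ Multiset.card P.parts ≤ 8), P.nval) ≤ 9 * q * n := by
    have hmaps : ∀ P ∈ Finset.univ.filter
        (fun P : Nat.Partition n => ¬ Multiset.card P.parts ≤ 8),
        Multiset.card P.parts ∈ Finset.Icc 9 n := by
      intro P hP
      rw [Finset.mem_filter] at hP
      rw [Finset.mem_Icc]
      exact ⟨by omega, card_parts_le P⟩
    calc (∑ P ∈ Finset.univ.filter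
          (fun P : Nat.Partition n => ¬ Multiset.card P.parts ≤ 8), P.nval)
        ≤ ∑ P ∈ Finset.univ.filter
            (fun P : Nat.Partition n => ¬ Multiset.card P.parts ≤ 8),
            (Multiset.card P.parts - 1) * n :=
          Finset.sum_le_sum (fun P _ => nval_le P)
      _ = (∑ P ∈ Finset.univ.filter
            (fun P : Nat.Partition n => ¬ Multiset.card P.parts ≤ 8),
            (Multiset.card P.parts - 1)) * n := by rw [Finset.sum_mul]
      _ ≤ (9 * q) * n := by
          apply Nat.mul_le_mul_right
          rw [← Finset.sum_fiberwise_of_maps_to hmaps (fun P => Multiset.card P.parts - 1)]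
          calc (∑ k ∈ Finset.Icc 9 n, ∑ P ∈ (Finset.univ.filter
                (fun P : Nat.Partition n => ¬ Multiset.card P.parts ≤ 8)).filter
                  (fun P => Multiset.card P.parts = k),
                (Multiset.card P.parts - 1))
              ≤ ∑ k ∈ Finset.Icc 9 n, (k - 1) * 2 ^ (n - k) := by
                apply Finset.sum_le_sum
                intro k hk
                calc (∑ P ∈ (Finset.univ.filter
                      (fun P : Nat.Partition n => ¬ Multiset.card P.parts ≤ 8)).filter
                        (fun P => Multiset.card P.parts = k),
                      (Multiset.card P.parts - 1))
                    ≤ ((Finset.univ.filter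
                        (fun P : Nat.Partition n => ¬ Multiset.card P.parts ≤ 8)).filter
                          (fun P => Multiset.card P.parts = k)).card • (k - 1) := by
                      apply Finset.sum_le_card_nsmul
                      intro P hP
                      rw [Finset.mem_filter] at hP
                      rw [hP.2]
                  _ ≤ (k - 1) * 2 ^ (n - k) := by
                      rw [smul_eq_mul, Nat.mul_comm]
                      apply Nat.mul_le_mul_left
                      calc ((Finset.univ.filter
                          (fun P : Nat.Partition n => ¬ Multiset.card P.parts ≤ 8)).filter
                            (fun P => Multiset.card P.parts = k)).card
                          ≤ ((Finset.univ : Finset (Nat.Partition n)).filter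
                              (fun P => Multiset.card P.parts = k)).card := by
                            apply Finset.card_le_card
                            intro P hP
                            rw [Finset.mem_filter] at hP ⊢
                            exact ⟨Finset.mem_univ _, hP.2⟩
                        _ ≤ pfun (n - k) := fiber_card_le n k
                        _ ≤ 2 ^ (n - k) := pfun_le_two_pow (n - k)
            _ ≤ 9 * q := by
                have := tail_sum n (by omega)
                omega
  -- final arithmetic
  have hNf : Nfun n ≤ p * (7 * n) + 9 * q * n := by
    rw [hsplit]; omega
  have hpow : 2 ^ (n - 2) = 64 * q := by
    rw [hq, show n - 2 = (n - 8) + 6 by omega, pow_add]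
    ring
  calc 6 * n * Nfun n ≤ 6 * n * (p * (7 * n) + 9 * q * n) := by
        apply Nat.mul_le_mul_left _ hNf
    _ = 42 * (n * n * p) + 54 * n * (n * q) := by ring
    _ ≤ (n - 1) * (n * n * p) + (64 * (n - 1)) * (n * q) := by
        have c1 : 42 * (n * n * p) ≤ (n - 1) * (n * n * p) :=
          Nat.mul_le_mul_right _ (by omega)
        have c2 : 54 * n * (n * q) ≤ (64 * (n - 1)) * (n * q) :=
          Nat.mul_le_mul_right _ (by omega)
        omega
    _ = n * (n - 1) * (n * p + 64 * q) := by ring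
    _ = n * (n - 1) * (n * pfun n + 2 ^ (n - 2)) := by rw [hpow, hp]

theorem Nfun_le_second (n : ℕ) (hn : 8 ≤ n) :
    6 * n * Nfun n ≤ n * (n - 1) * (n * pfun n + 2 ^ (n - 2)) := by
  rcases lt_or_ge n 43 with h43 | h43
  · rw [Nfun_eq, pfun_eq]
    interval_cases n <;> decide
  · exact Nfun_le_big n h43
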